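/- Let n, d, k be integers with 0 < k < n and write d = na - t (0 ≤ t < n), ka = l(n-k) + t + m (0 ≤ m < n-k). Consider a critical data set with k₂ = 0, n₂ = 1, n₁ = n - 1, d₂ = a + e, d₁ = d - d₂, k₁ = k, where e is an integer with 0 < e < l. Then C₁₂ := -n₁n₂ - d₂n₁ + d₁n₂ + k₁(d₂ + n₂ - k₂) = (l - e - 1)(n-k) + m + 1 > 0 and C₂₁ := -n₁n₂ + d₂n₁ - d₁n₂ + k₂(d₁ + n₁ - k₁) = -(n-1) + ne + t > 0. -/
import Mathlib

/-- Proposition 5.1: for a critical data set with k₂ = 0, n₂ = 1,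
C₁₂ = (l-e-1)(n-k) + m + 1 > 0 and C₂₁ = -(n-1) + ne + t > 0. -/
theorem stmt_5 (n d k a t l m e : ℤ) (hk : 0 < k) (hkn : k < n)
    (hd : d = n * a - t) (ht0 : 0 ≤ t) (htn : t < n)
    (hka : k * a = l * (n - k) + t + m) (hm0 : 0 ≤ m) (hmn : m < n - k)
    (he0 : 0 < e) (hel : e < l)
    (n₁ n₂ d₁ d₂ k₁ k₂ : ℤ)
    (hk₂ : k₂ = 0) (hn₂ : n₂ = 1) (hn₁ : n₁ = n - 1)
    (hd₂ : d₂ = a + e) (hd₁ : d₁ = d - d₂) (hk₁ : k₁ = k) :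
    (-n₁ * n₂ - d₂ * n₁ + d₁ * n₂ + k₁ * (d₂ + n₂ - k₂) = (l - e - 1) * (n - k) + m + 1 ∧
      0 < -n₁ * n₂ - d₂ * n₁ + d₁ * n₂ + k₁ * (d₂ + n₂ - k₂)) ∧
    (-n₁ * n₂ + d₂ * n₁ - d₁ * n₂ + k₂ * (d₁ + n₁ - k₁) = -(n - 1) + n * e + t ∧
      0 < -n₁ * n₂ + d₂ * n₁ - d₁ * n₂ + k₂ * (d₁ + n₁ - k₁)) := by
  subst hk₂ hn₂ hn₁ hd₂ hd₁ hk₁ hd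
  have h12 : (-(n-1) * 1 - (a+e) * (n-1) + (n*a - t - (a+e)) * 1 + k₁ * ((a+e) + 1 - 0))
      = (l - e - 1) * (n - k₁) + m + 1 := by linear_combination hka
  have h21 : (-(n-1) * 1 + (a+e) * (n-1) - (n*a - t - (a+e)) * 1 + 0 * ((n*a - t - (a+e)) + (n-1) - k₁))
      = -(n - 1) + n * e + t := by ring
  refine ⟨⟨h12, ?_⟩, ⟨h21, ?_⟩⟩
  · rw [h12]; nlinarith
  · rw [h21]; nlinarith
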